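/- For every positive integer n, a finite lattice L embeds into Co(P) for some poset P of length at most n if and only if L embeds into Co(Q) for some finite poset Q of length at most n. -/

import Mathlib

/-! Common definitions: lattices of order-convex subsets of a poset,
length of a poset, the identities (S), (U), (B), (L2), (H_n), (H_{m,n}),
join-irreducibility, the join-dependency relation, join-seeds,
the posets P_{I,J}, tree-like posets, D-closed sets,
and complete lattice congruences. -/

open Set

/-- The lattice `Co P` of all order-convex subsets of a poset `P`. -/
def Co (P : Type*) [PartialOrder P] : Type _ := {s : Set P // s.OrdConnected}

namespace Co

variable {P : Type*} [PartialOrder P]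

instance : PartialOrder (Co P) := Subtype.partialOrder _

instance : InfSet (Co P) :=
  ⟨fun S => ⟨⋂ s ∈ S, s.1, Set.ordConnected_biInter fun s _ => s.2⟩⟩

noncomputable instance : CompleteLattice (Co P) :=
  completeLatticeOfInf (Co P) (by
    intro S
    constructor
    · intro t ht
      exact Set.biInter_subset_of_mem (t := fun s => s.1) ht
    · intro b hb
      exact Set.subset_iInter₂ fun t ht => hb ht)

/-- The order-convex subset of `P` with underlying set `X`. -/
def mk' (X : Set P) (hX : X.OrdConnected) : Co P := ⟨X, hX⟩

/-- The singleton `{p}`, as an order-convex set. -/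
def sngl (p : P) : Co P := ⟨{p}, Set.ordConnected_singleton⟩

/-- The empty order-convex set. -/
def emp : Co P := ⟨∅, Set.ordConnected_empty⟩

end Co

/-- `lengthLE P n` states that the poset `P` has length at most `n`, that is,
every finite chain of `P` has at most `n + 1` elements. -/
def lengthLE (P : Type*) [PartialOrder P] (n : ℕ) : Prop :=
  ∀ C : Finset P, IsChain (· ≤ ·) (C : Set P) → C.card ≤ n + 1

section Identities

/-- The Stirlitz identity (S). -/
def IdS (L : Type*) [Lattice L] : Prop :=
  ∀ a b b₀ b₁ c : L,
    a ⊓ ((b ⊓ (b₀ ⊔ b₁)) ⊔ c) =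
      (a ⊓ (b ⊓ (b₀ ⊔ b₁)))
      ⊔ (a ⊓ (b₀ ⊔ c) ⊓ ((b ⊓ (b₀ ⊔ b₁) ⊓ (a ⊔ b₀)) ⊔ c))
      ⊔ (a ⊓ (b₁ ⊔ c) ⊓ ((b ⊓ (b₀ ⊔ b₁) ⊓ (a ⊔ b₁)) ⊔ c))

/-- The Udav identity (U). -/
def IdU (L : Type*) [Lattice L] : Prop :=
  ∀ x x₀ x₁ x₂ : L,
    x ⊓ (x₀ ⊔ x₁) ⊓ (x₁ ⊔ x₂) ⊓ (x₀ ⊔ x₂) =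
      (x ⊓ x₀ ⊓ (x₁ ⊔ x₂)) ⊔ (x ⊓ x₁ ⊓ (x₀ ⊔ x₂)) ⊔ (x ⊓ x₂ ⊓ (x₀ ⊔ x₁))

/-- The Bond identity (B). -/
def IdB (L : Type*) [Lattice L] : Prop :=
  ∀ x a₀ a₁ b₀ b₁ : L,
    x ⊓ (a₀ ⊔ a₁) ⊓ (b₀ ⊔ b₁) =
      (x ⊓ a₀ ⊓ (b₀ ⊔ b₁)) ⊔ (x ⊓ a₁ ⊓ (b₀ ⊔ b₁))
      ⊔ (x ⊓ b₀ ⊓ (a₀ ⊔ a₁)) ⊔ (x ⊓ b₁ ⊓ (a₀ ⊔ a₁))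
      ⊔ (x ⊓ (a₀ ⊔ a₁) ⊓ (b₀ ⊔ b₁) ⊓ (a₀ ⊔ b₀) ⊓ (a₁ ⊔ b₁))
      ⊔ (x ⊓ (a₀ ⊔ a₁) ⊓ (b₀ ⊔ b₁) ⊓ (a₀ ⊔ b₁) ⊓ (a₁ ⊔ b₀))

/-- The identity (L₂). -/
def IdL2 (L : Type*) [Lattice L] : Prop :=
  ∀ a b b' c c' : L,
    a ⊓ ((b ⊓ (c ⊔ c')) ⊔ b') =
      (a ⊓ b ⊓ (c ⊔ c')) ⊔ (a ⊓ ((b ⊓ c) ⊔ b')) ⊔ (a ⊓ ((b ⊓ c') ⊔ b'))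

variable {L : Type*} [Lattice L]

/-- The lattice polynomial `U_{i,n}` (in the variables `x₀, …, xₙ, x'₁, …, x'ₙ`). -/
def Upoly (x x' : ℕ → L) (n : ℕ) (i : ℕ) : L :=
  if h : n ≤ i then x n
  else x i ⊓ (Upoly x x' n (i + 1) ⊔ x' (i + 1))
  termination_by n - i
  decreasing_by omega

/-- The lattice polynomial `V_{i,j,n}`. -/
def Vpoly (x x' : ℕ → L) (n i : ℕ) (j : ℕ) : L :=
  if h : i ≤ j then (x i ⊓ Upoly x x' n (i + 1)) ⊔ (x i ⊓ x' (i + 1))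
  else x j ⊓ (Vpoly x x' n i (j + 1) ⊔ x' (j + 1))
  termination_by i - j
  decreasing_by omega

/-- The lattice polynomial `W_{i,j,n}`. -/
def Wpoly (x x' : ℕ → L) (n i : ℕ) (j : ℕ) : L :=
  if h : i ≤ j then
    x i ⊓ (x' (i + 1) ⊔ x' (i + 2)) ⊓ ((Upoly x x' n (i + 1) ⊓ (x i ⊔ x' (i + 2))) ⊔ x' (i + 1))
  else x j ⊓ (Wpoly x x' n i (j + 1) ⊔ x' (j + 1))
  termination_by i - j
  decreasing_by omega

/-- `bigJoin f k = f 0 ⊔ f 1 ⊔ ⋯ ⊔ f k`. -/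
def bigJoin (f : ℕ → L) : ℕ → L
  | 0 => f 0
  | k + 1 => bigJoin f k ⊔ f (k + 1)

end Identities

/-- The identity (Hₙ) : `Uₙ = ⋁_{0 ≤ i ≤ n-1} V_{i,n} ∨ ⋁_{0 ≤ i ≤ n-2} W_{i,n}`
(intended for `n ≥ 1`). -/
def IdH (n : ℕ) (L : Type*) [Lattice L] : Prop :=
  ∀ x x' : ℕ → L,
    Upoly x x' n 0 =
      bigJoin (fun i =>
        if i + 2 ≤ n then Vpoly x x' n i 0 ⊔ Wpoly x x' n i 0 else Vpoly x x' n i 0) (n - 1)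

/-- The identity (H_{m,n}) (intended for `m, n ≥ 1`); the common base point is
`x 0 = y 0 = t`. -/
def IdHmn (m n : ℕ) (L : Type*) [Lattice L] : Prop :=
  ∀ x x' y y' : ℕ → L, x 0 = y 0 →
    Upoly x x' m 0 ⊓ Upoly y y' n 0 =
      bigJoin (fun i =>
          if i + 2 ≤ m then
            (Vpoly x x' m i 0 ⊓ Upoly y y' n 0) ⊔ (Wpoly x x' m i 0 ⊓ Upoly y y' n 0)
          else Vpoly x x' m i 0 ⊓ Upoly y y' n 0) (m - 1)
      ⊔ bigJoin (fun j =>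
          if j + 2 ≤ n then
            (Upoly x x' m 0 ⊓ Vpoly y y' n j 0) ⊔ (Upoly x x' m 0 ⊓ Wpoly y y' n j 0)
          else Upoly x x' m 0 ⊓ Vpoly y y' n j 0) (n - 1)
      ⊔ (Upoly x x' m 0 ⊓ Upoly y y' n 0 ⊓ (x 1 ⊔ y' 1) ⊓ (x' 1 ⊔ y 1))

/-- `p` is join-irreducible: `p = x ⊔ y` implies `p = x` or `p = y`. -/
def JIrr {L : Type*} [Lattice L] (p : L) : Prop :=
  ∀ x y : L, p = x ⊔ y → p = x ∨ p = y

/-- The join-dependency relation `p D q`. -/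
def DRel {L : Type*} [Lattice L] (p q : L) : Prop :=
  p ≠ q ∧ ∃ x : L, p ≤ q ⊔ x ∧ ∀ y < q, ¬ p ≤ y ⊔ x

/-- A subset `S` of a lattice `L` is a join-seed. -/
def JoinSeed (L : Type*) [Lattice L] (S : Set L) : Prop :=
  (∀ p ∈ S, JIrr p) ∧
  (∀ a : L, ∃ T ⊆ S, IsLUB T a) ∧
  (∀ p ∈ S, ∀ a b : L, p ≤ a ⊔ b → ¬ p ≤ a → ¬ p ≤ b →
    ∃ x ∈ S, ∃ y ∈ S, x ≤ a ∧ y ≤ b ∧ p ≤ x ⊔ y ∧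
      (∀ x' < x, ¬ p ≤ x' ⊔ y) ∧ (∀ y' < y, ¬ p ≤ x ⊔ y'))

/-- The poset `P_{I,J} = I ∪ {p} ∪ J`, where every element of `I` is below `p`,
`p` is below every element of `J`, every element of `I` is below every element
of `J`, and there are no other strict comparabilities. -/
def PIJ (I J : Type*) : Type _ := I ⊕ (Unit ⊕ J)

namespace PIJ

variable {I J : Type*}

/-- The rank (height) of an element of `P_{I,J}`. -/
def rank (a : PIJ I J) : ℕ :=
  Sum.elim (fun _ => 0) (Sum.elim (fun _ => 1) fun _ => 2) a

instance : PartialOrder (PIJ I J) where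
  le a b := a = b ∨ rank a < rank b
  le_refl a := Or.inl rfl
  le_trans a b c hab hbc := by
    rcases hab with rfl | h
    · exact hbc
    · rcases hbc with rfl | h'
      · exact Or.inr h
      · exact Or.inr (h.trans h')
  le_antisymm a b hab hba := by
    rcases hab with rfl | h
    · rfl
    · rcases hba with rfl | h'
      · rfl
      · omega

end PIJ

/-- A poset is tree-like if it has no infinite bounded chain and between any two
points there is at most one repetition-free finite path with respect to the
covering relation. -/
def TreeLike (P : Type*) [PartialOrder P] : Prop :=
  (∀ C : Set P, IsChain (· ≤ ·) C → BddAbove C → BddBelow C → C.Finite) ∧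
  (∀ a b : P, ∀ l₁ l₂ : List P,
    l₁.Nodup → l₁.head? = some a → l₁.getLast? = some b →
      l₁.Chain' (fun u v => u ⋖ v ∨ v ⋖ u) →
    l₂.Nodup → l₂.head? = some a → l₂.getLast? = some b →
      l₂.Chain' (fun u v => u ⋖ v ∨ v ⋖ u) →
    l₁ = l₂)

/-- A subset `U` of a poset `P` is `D`-closed. -/
def DClosed {P : Type*} [PartialOrder P] (U : Set P) : Prop :=
  ∀ x p y : P, x < p → p < y → (x ∈ U ∨ y ∈ U) → p ∈ U

/-- A complete congruence of a complete lattice. -/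
structure IsCompleteCongr {L : Type*} [CompleteLattice L] (θ : L → L → Prop) : Prop where
  refl : ∀ x, θ x x
  symm : ∀ {x y}, θ x y → θ y x
  trans : ∀ {x y z}, θ x y → θ y z → θ x z
  sup : ∀ {a b c d}, θ a b → θ c d → θ (a ⊔ c) (b ⊔ d)
  inf : ∀ {a b c d}, θ a b → θ c d → θ (a ⊓ c) (b ⊓ d)
  cSup : ∀ (x : L) (Y : Set L), Y.Nonempty → (∀ y ∈ Y, θ x y) → θ x (sSup Y)
  cInf : ∀ (x : L) (Y : Set L), Y.Nonempty → (∀ y ∈ Y, θ x y) → θ x (sInf Y)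

/-- The map `h_U : Co(P) → Co(P ∖ U)`, `X ↦ X ∖ U`. -/
def coRestrict {P : Type*} [PartialOrder P] (U : Set P) (X : Co P) :
    Co {p : P // p ∉ U} :=
  ⟨Subtype.val ⁻¹' X.1, by
    constructor
    rintro a ha b hb z hz
    exact X.2.out ha hb ⟨hz.1, hz.2⟩⟩

/-- The lattice `D(P)` of all `D`-closed subsets of a poset `P`. -/
def DSub (P : Type*) [PartialOrder P] : Type _ := {U : Set P // DClosed U}

namespace DSub

variable {P : Type*} [PartialOrder P]

instance : PartialOrder (DSub P) := Subtype.partialOrder _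

instance : InfSet (DSub P) :=
  ⟨fun S => ⟨⋂ U ∈ S, U.1, by
    intro x p y h1 h2 h3
    simp only [Set.mem_iInter] at h3 ⊢
    intro U hU
    exact U.2 x p y h1 h2 (h3.imp (fun h => h U hU) fun h => h U hU)⟩⟩

noncomputable instance : CompleteLattice (DSub P) :=
  completeLatticeOfInf (DSub P) (by
    intro S
    constructor
    · intro t ht
      exact Set.biInter_subset_of_mem (t := fun U => U.1) ht
    · intro b hb
      exact Set.subset_iInter₂ fun t ht => hb ht)

end DSub

section Stmt7Aux
set_option linter.unusedSectionVars false

open Relation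

universe u

variable {L : Type u} [Lattice L] [Fintype L] {P : Type u} [PartialOrder P]

lemma Co.le_def' {X Y : Co P} : X ≤ Y ↔ X.1 ⊆ Y.1 := Iff.rfl

lemma Co.mem_inf'' {X Y : Co P} {w : P} (h1 : w ∈ X.1) (h2 : w ∈ Y.1) :
    w ∈ (X ⊓ Y).1 := by
  have : Co.mk' (X.1 ∩ Y.1) (X.2.inter Y.2) ≤ X ⊓ Y :=
    le_inf (Co.le_def'.mpr fun w hw => hw.1) (Co.le_def'.mpr fun w hw => hw.2)
  exact Co.le_def'.mp this ⟨h1, h2⟩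

lemma Co.between {X Y : Co P} {z : P} (hz : z ∈ (X ⊔ Y).1) :
    ∃ x ∈ X.1 ∪ Y.1, ∃ y ∈ X.1 ∪ Y.1, x ≤ z ∧ z ≤ y := by
  have hconv : ({w | ∃ x ∈ X.1 ∪ Y.1, ∃ y ∈ X.1 ∪ Y.1, x ≤ w ∧ w ≤ y} : Set P).OrdConnected := by
    constructor
    rintro a ⟨xa, hxa, ya, hya, h1, h2⟩ b ⟨xb, hxb, yb, hyb, h3, h4⟩ w hw
    exact ⟨xa, hxa, yb, hyb, h1.trans hw.1, hw.2.trans h4⟩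
  have hle : X ⊔ Y ≤ ⟨_, hconv⟩ := by
    refine sup_le ?_ ?_ <;>
      exact Co.le_def'.mpr fun w hw =>
        ⟨w, by simp [hw], w, by simp [hw], le_rfl, le_rfl⟩
  exact Co.le_def'.mp hle hz

variable (f : LatticeHom L (Co P))

/-- The subposet of points of `P` covered by some `f a`. -/
def Pp : Type u := {z : P // ∃ a : L, z ∈ (f a).1}

instance : PartialOrder (Pp f) := Subtype.partialOrder _

lemma Pp.setne (z : Pp f) : ((Set.toFinite {a : L | z.1 ∈ (f a).1}).toFinset).Nonempty := by
  obtain ⟨a, ha⟩ := z.2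
  exact ⟨a, by simpa [Set.Finite.mem_toFinset] using ha⟩

/-- The least `a : L` with `z ∈ f a`. -/
noncomputable def uu (z : Pp f) : L :=
  ((Set.toFinite {a : L | z.1 ∈ (f a).1}).toFinset).inf' (Pp.setne f z) id

lemma mem_uu (z : Pp f) : z.1 ∈ (f (uu f z)).1 := by
  have : ∀ (s : Finset L) (hs : s.Nonempty), (∀ a ∈ s, z.1 ∈ (f a).1) →
      z.1 ∈ (f (s.inf' hs id)).1 := by
    intro s hs
    induction hs using Finset.Nonempty.cons_induction with
    | singleton a => intro h; simpa using h a (by simp)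
    | cons a s ha hs ih =>
      intro h
      rw [Finset.inf'_cons hs, id, map_inf]
      exact Co.mem_inf'' (h a (by simp)) (ih fun b hb => h b (by simp [hb]))
  exact this _ _ (fun a ha => by simpa [Set.Finite.mem_toFinset] using ha)

lemma uu_le_iff (z : Pp f) (a : L) : uu f z ≤ a ↔ z.1 ∈ (f a).1 := by
  constructor
  · intro h
    exact Co.le_def'.mp (OrderHomClass.mono f h) (mem_uu f z)
  · intro h
    exact Finset.inf'_le id (by simpa [Set.Finite.mem_toFinset] using h)

lemma uu_between {x z y : Pp f} (hxz : x ≤ z) (hzy : z ≤ y) :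
    uu f z ≤ uu f x ⊔ uu f y := by
  rw [uu_le_iff]
  have hx : x.1 ∈ (f (uu f x ⊔ uu f y)).1 := (uu_le_iff f x _).mp le_sup_left
  have hy : y.1 ∈ (f (uu f x ⊔ uu f y)).1 := (uu_le_iff f y _).mp le_sup_right
  exact (f (uu f x ⊔ uu f y)).2.out hx hy
    ⟨Subtype.coe_le_coe.mpr hxz, Subtype.coe_le_coe.mpr hzy⟩

lemma uu_witness {z : Pp f} {a b : L} (h : uu f z ≤ a ⊔ b)
    (ha : ¬ uu f z ≤ a) (hb : ¬ uu f z ≤ b) :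
    ∃ x y : Pp f, x < z ∧ z < y ∧
      ((uu f x ≤ a ∧ uu f y ≤ b) ∨ (uu f x ≤ b ∧ uu f y ≤ a)) := by
  have hz : z.1 ∈ (f a ⊔ f b).1 := by
    have := (uu_le_iff f z (a ⊔ b)).mp h
    rwa [map_sup] at this
  obtain ⟨x0, hx0, y0, hy0, hxz, hzy⟩ := Co.between hz
  have hza : z.1 ∉ (f a).1 := fun hmem => ha ((uu_le_iff f z a).mpr hmem)
  have hzb : z.1 ∉ (f b).1 := fun hmem => hb ((uu_le_iff f z b).mpr hmem)
  have hx0P : ∃ c : L, x0 ∈ (f c).1 := by rcases hx0 with h' | h' <;> exact ⟨_, h'⟩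
  have hy0P : ∃ c : L, y0 ∈ (f c).1 := by rcases hy0 with h' | h' <;> exact ⟨_, h'⟩
  refine ⟨⟨x0, hx0P⟩, ⟨y0, hy0P⟩, ?_, ?_, ?_⟩
  · refine lt_of_le_of_ne (Subtype.coe_le_coe.mp hxz) fun e => ?_
    obtain rfl : x0 = z.1 := congrArg Subtype.val e
    rcases hx0 with h' | h'
    · exact hza h'
    · exact hzb h'
  · refine lt_of_le_of_ne (Subtype.coe_le_coe.mp hzy) fun e => ?_
    obtain rfl : y0 = z.1 := (congrArg Subtype.val e).symm
    rcases hy0 with h' | h'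
    · exact hza h'
    · exact hzb h'
  · rcases hx0 with h1 | h1 <;> rcases hy0 with h2 | h2
    · exact absurd ((f a).2.out h1 h2 ⟨hxz, hzy⟩) hza
    · exact Or.inl ⟨(uu_le_iff f _ a).mpr h1, (uu_le_iff f _ b).mpr h2⟩
    · exact Or.inr ⟨(uu_le_iff f _ b).mpr h1, (uu_le_iff f _ a).mpr h2⟩
    · exact absurd ((f b).2.out h1 h2 ⟨hxz, hzy⟩) hzb

lemma uu_separating (hf : Function.Injective f) {a b : L} (hab : ¬ a ≤ b) :
    ∃ z : Pp f, uu f z ≤ a ∧ ¬ uu f z ≤ b := by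
  have hns : ¬ (f a).1 ⊆ (f b).1 := by
    intro hsub
    apply hab
    have : f a ⊓ f b = f a := inf_eq_left.mpr (Co.le_def'.mpr hsub)
    rw [← map_inf] at this
    exact inf_eq_left.mp (hf this)
  obtain ⟨z0, hz0a, hz0b⟩ := Set.not_subset.mp hns
  refine ⟨⟨z0, a, hz0a⟩, (uu_le_iff f _ a).mpr hz0a, fun h => hz0b ?_⟩
  exact (uu_le_iff f _ b).mp h


/-- The set of sizes of chains strictly below `z` in `Pp f`. -/
def chainsBelow (z : Pp f) : Set ℕ :=
  {k | ∃ C : Finset (Pp f), IsChain (· ≤ ·) (C : Set (Pp f)) ∧ (∀ w ∈ C, w < z) ∧ C.card = k}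

lemma chainsBelow_zero (z : Pp f) : 0 ∈ chainsBelow f z :=
  ⟨∅, by simp [IsChain], by simp, by simp⟩

lemma lengthLE_Pp {n : ℕ} (hP : lengthLE P n) : lengthLE (Pp f) n := by
  intro C hC
  have := hP (C.map ⟨Subtype.val, Subtype.val_injective⟩) ?_
  · exact (Finset.card_map _).symm.le.trans this
  · intro x hx y hy hxy
    replace hx := Finset.mem_map.mp (Finset.mem_coe.mp hx)
    replace hy := Finset.mem_map.mp (Finset.mem_coe.mp hy)
    obtain ⟨x', hx', rfl⟩ := hx
    obtain ⟨y', hy', rfl⟩ := hy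
    have := hC hx' hy' (fun h => hxy (congrArg _ h))
    rcases this with h | h
    · exact Or.inl (Subtype.coe_le_coe.mpr h)
    · exact Or.inr (Subtype.coe_le_coe.mpr h)

lemma chainsBelow_bdd {n : ℕ} (hP : lengthLE P n) {z : Pp f} {k : ℕ}
    (hk : k ∈ chainsBelow f z) : k ≤ n := by
  classical
  obtain ⟨C, hC, hlt, rfl⟩ := hk
  have hzC : z ∉ C := fun h => lt_irrefl z (hlt z h)
  have hchain : IsChain (· ≤ ·) ((insert z C : Finset (Pp f)) : Set (Pp f)) := by
    rw [Finset.coe_insert]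
    exact hC.insert fun b hb _ => Or.inr (le_of_lt (hlt b hb))
  have := lengthLE_Pp f hP _ hchain
  rw [Finset.card_insert_of_notMem hzC] at this
  omega

/-- The height of an element of `Pp f`. -/
noncomputable def ht (z : Pp f) : ℕ := sSup (chainsBelow f z)

lemma ht_mem {n : ℕ} (hP : lengthLE P n) (z : Pp f) : ht f z ∈ chainsBelow f z :=
  Nat.sSup_mem ⟨0, chainsBelow_zero f z⟩ ⟨n, fun _ hk => chainsBelow_bdd f hP hk⟩

lemma ht_le {n : ℕ} (hP : lengthLE P n) (z : Pp f) : ht f z ≤ n :=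
  chainsBelow_bdd f hP (ht_mem f hP z)

lemma ht_lt {n : ℕ} (hP : lengthLE P n) {x z : Pp f} (hxz : x < z) :
    ht f x < ht f z := by
  classical
  obtain ⟨C, hC, hlt, hcard⟩ := ht_mem f hP x
  have hxC : x ∉ C := fun h => lt_irrefl x (hlt x h)
  have hmem : ht f x + 1 ∈ chainsBelow f z := by
    refine ⟨insert x C, ?_, ?_, ?_⟩
    · rw [Finset.coe_insert]
      exact hC.insert fun b hb _ => Or.inr (le_of_lt (hlt b hb))
    · intro w hw
      rcases Finset.mem_insert.mp hw with rfl | hw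
      · exact hxz
      · exact (hlt w hw).trans hxz
    · rw [Finset.card_insert_of_notMem hxC, hcard]
  have h5 : ht f x + 1 ≤ ht f z := le_csSup ⟨n, fun _ hk => chainsBelow_bdd f hP hk⟩ hmem
  omega

variable (n : ℕ) (hP : lengthLE P n)

/-- The invariant map. -/
noncomputable def iota (z : Pp f) : L × Set L × Set L × Fin (n + 1) :=
  (uu f z, {m | ∃ x : Pp f, x < z ∧ uu f x = m}, {m | ∃ y : Pp f, z < y ∧ uu f y = m},
    ⟨ht f z, Nat.lt_succ_of_le (ht_le f hP z)⟩)

/-- The finite quotient poset. -/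
def QQ : Type u := {t : L × Set L × Set L × Fin (n + 1) // t ∈ Set.range (iota f n hP)}

/-- The edge relation on invariants. -/
def rr (c d : L × Set L × Set L × Fin (n + 1)) : Prop :=
  ∃ x z : Pp f, x < z ∧ iota f n hP x = c ∧ iota f n hP z = d

lemma rr_lt {c d : L × Set L × Set L × Fin (n + 1)} (h : rr f n hP c d) :
    (c.2.2.2 : ℕ) < (d.2.2.2 : ℕ) := by
  obtain ⟨x, z, hxz, rfl, rfl⟩ := h
  exact ht_lt f hP hxz

lemma tg_lt {c d : L × Set L × Set L × Fin (n + 1)}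
    (h : Relation.TransGen (rr f n hP) c d) : (c.2.2.2 : ℕ) < (d.2.2.2 : ℕ) := by
  induction h with
  | single h => exact rr_lt f n hP h
  | tail _ h ih => exact ih.trans (rr_lt f n hP h)

noncomputable instance : PartialOrder (QQ f n hP) where
  le q₁ q₂ := q₁ = q₂ ∨ Relation.TransGen (rr f n hP) q₁.1 q₂.1
  le_refl q := Or.inl rfl
  le_trans q₁ q₂ q₃ h12 h23 := by
    rcases h12 with rfl | h12
    · exact h23
    · rcases h23 with rfl | h23
      · exact Or.inr h12
      · exact Or.inr (h12.trans h23)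
  le_antisymm q₁ q₂ h12 h21 := by
    rcases h12 with rfl | h12
    · rfl
    · rcases h21 with rfl | h21
      · rfl
      · exact absurd ((tg_lt f n hP h12).trans (tg_lt f n hP h21)) (lt_irrefl _)

lemma QQ_le_iff {q₁ q₂ : QQ f n hP} :
    q₁ ≤ q₂ ↔ q₁ = q₂ ∨ Relation.TransGen (rr f n hP) q₁.1 q₂.1 := Iff.rfl

instance : Finite (QQ f n hP) := by
  unfold QQ
  infer_instance

lemma lengthLE_QQ : lengthLE (QQ f n hP) n := by
  intro C hC
  classical
  have hinj : Set.InjOn (fun q : QQ f n hP => q.1.2.2.2) (C : Set (QQ f n hP)) := by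
    intro q1 h1 q2 h2 heq
    have heq' : (q1.1.2.2.2 : Fin (n + 1)) = q2.1.2.2.2 := heq
    by_contra hne
    rcases hC h1 h2 hne with h | h
    · rcases (QQ_le_iff f n hP).mp h with h' | h'
      · exact hne h'
      · have := tg_lt f n hP h'
        rw [heq'] at this
        exact lt_irrefl _ this
    · rcases (QQ_le_iff f n hP).mp h with h' | h'
      · exact hne h'.symm
      · have := tg_lt f n hP h'
        rw [heq'] at this
        exact lt_irrefl _ this
  calc C.card = (C.image fun q : QQ f n hP => q.1.2.2.2).card :=
        (Finset.card_image_of_injOn hinj).symm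
    _ ≤ Fintype.card (Fin (n + 1)) := Finset.card_le_univ _
    _ = n + 1 := Fintype.card_fin _

lemma iota_down {z z' : Pp f} (h : iota f n hP z = iota f n hP z') {x : Pp f}
    (hx : x < z) : ∃ x' : Pp f, x' < z' ∧ uu f x' = uu f x := by
  have hm : uu f x ∈ (iota f n hP z').2.1 := by rw [← h]; exact ⟨x, hx, rfl⟩
  exact hm

lemma iota_up {z z' : Pp f} (h : iota f n hP z = iota f n hP z') {y : Pp f}
    (hy : z < y) : ∃ y' : Pp f, z' < y' ∧ uu f y' = uu f y := by
  have hm : uu f y ∈ (iota f n hP z').2.2.1 := by rw [← h]; exact ⟨y, hy, rfl⟩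
  exact hm

lemma tg_down {c d : L × Set L × Set L × Fin (n + 1)}
    (h : Relation.TransGen (rr f n hP) c d) :
    ∀ z : Pp f, iota f n hP z = d → ∃ x : Pp f, x < z ∧ uu f x = c.1 := by
  induction h with
  | single h =>
    rintro z hz
    obtain ⟨x0, z0, hx0, rfl, hd⟩ := h
    exact iota_down f n hP (hd.trans hz.symm) hx0
  | tail _ h2 ih =>
    rintro z hz
    obtain ⟨w, z0, hwz0, hw, hz0⟩ := h2
    obtain ⟨x, hxw, hux⟩ := ih w hw
    obtain ⟨x', hx', hux'⟩ := iota_down f n hP (hz0.trans hz.symm) (hxw.trans hwz0)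
    exact ⟨x', hx', hux'.trans hux⟩

lemma tg_up {c d : L × Set L × Set L × Fin (n + 1)}
    (h : Relation.TransGen (rr f n hP) c d) :
    ∀ z : Pp f, iota f n hP z = c → ∃ y : Pp f, z < y ∧ uu f y = d.1 := by
  induction h using Relation.TransGen.head_induction_on with
  | single h =>
    rintro z hz
    obtain ⟨x0, z0, hx0, hc, rfl⟩ := h
    exact iota_up f n hP (hc.trans hz.symm) hx0
  | head h1 _ ih =>
    rintro z hz
    obtain ⟨x0, w0, hxw, hx0, hw0⟩ := h1
    obtain ⟨y, hwy, huy⟩ := ih w0 hw0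
    obtain ⟨y', hy', huy'⟩ := iota_up f n hP (hx0.trans hz.symm) (hxw.trans hwy)
    exact ⟨y', hy', huy'.trans huy⟩

lemma gset_conv (a : L) : Set.OrdConnected {q : QQ f n hP | q.1.1 ≤ a} := by
  constructor
  rintro q1 h1 q2 h2 q ⟨hq1, hq2⟩
  rcases (QQ_le_iff f n hP).mp hq1 with rfl | h1'
  · exact h1
  rcases (QQ_le_iff f n hP).mp hq2 with rfl | h2'
  · exact h2
  obtain ⟨z, hz⟩ := q.2
  obtain ⟨x, hxz, hux⟩ := tg_down f n hP h1' z hz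
  obtain ⟨y, hzy, huy⟩ := tg_up f n hP h2' z hz
  have h3 : uu f z ≤ uu f x ⊔ uu f y := uu_between f (le_of_lt hxz) (le_of_lt hzy)
  have h4 : q.1.1 = uu f z := by rw [← hz]; rfl
  rw [Set.mem_setOf_eq, h4]
  calc uu f z ≤ uu f x ⊔ uu f y := h3
    _ = q1.1.1 ⊔ q2.1.1 := by rw [hux, huy]
    _ ≤ a := sup_le h1 h2

/-- The embedding of `L` into `Co (QQ f n hP)`, as a function. -/
noncomputable def gmap (a : L) : Co (QQ f n hP) := ⟨{q | q.1.1 ≤ a}, gset_conv f n hP a⟩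

lemma gmap_inf (a b : L) : gmap f n hP (a ⊓ b) = gmap f n hP a ⊓ gmap f n hP b := by
  apply le_antisymm
  · exact le_inf (Co.le_def'.mpr fun q hq => hq.trans inf_le_left)
      (Co.le_def'.mpr fun q hq => hq.trans inf_le_right)
  · refine Co.le_def'.mpr fun q hq => ?_
    have ha : q.1.1 ≤ a := Co.le_def'.mp inf_le_left hq
    have hb : q.1.1 ≤ b := Co.le_def'.mp inf_le_right hq
    exact le_inf ha hb

lemma gmap_sup (a b : L) : gmap f n hP (a ⊔ b) = gmap f n hP a ⊔ gmap f n hP b := by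
  apply le_antisymm
  · refine Co.le_def'.mpr fun q hq => ?_
    have hWa : (gmap f n hP a).1 ⊆ (gmap f n hP a ⊔ gmap f n hP b).1 :=
      Co.le_def'.mp le_sup_left
    have hWb : (gmap f n hP b).1 ⊆ (gmap f n hP a ⊔ gmap f n hP b).1 :=
      Co.le_def'.mp le_sup_right
    obtain ⟨z, hz⟩ := q.2
    have h4 : q.1.1 = uu f z := by rw [← hz]; rfl
    have hq' : uu f z ≤ a ⊔ b := by rw [← h4]; exact hq
    by_cases ha : uu f z ≤ a
    · exact hWa (by show q.1.1 ≤ a; rw [h4]; exact ha)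
    by_cases hb : uu f z ≤ b
    · exact hWb (by show q.1.1 ≤ b; rw [h4]; exact hb)
    obtain ⟨x, y, hxz, hzy, hcase⟩ := uu_witness f hq' ha hb
    set qx : QQ f n hP := ⟨iota f n hP x, Set.mem_range_self x⟩ with hqx
    set qy : QQ f n hP := ⟨iota f n hP y, Set.mem_range_self y⟩ with hqy
    have hle1 : qx ≤ q := by
      refine (QQ_le_iff f n hP).mpr (Or.inr (Relation.TransGen.single ?_))
      exact ⟨x, z, hxz, rfl, hz⟩
    have hle2 : q ≤ qy := by
      refine (QQ_le_iff f n hP).mpr (Or.inr (Relation.TransGen.single ?_))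
      exact ⟨z, y, hzy, hz, rfl⟩
    have hqxm : qx ∈ (gmap f n hP a ⊔ gmap f n hP b).1 := by
      rcases hcase with ⟨h1, _⟩ | ⟨h1, _⟩
      · exact hWa h1
      · exact hWb h1
    have hqym : qy ∈ (gmap f n hP a ⊔ gmap f n hP b).1 := by
      rcases hcase with ⟨_, h2⟩ | ⟨_, h2⟩
      · exact hWb h2
      · exact hWa h2
    exact (gmap f n hP a ⊔ gmap f n hP b).2.out hqxm hqym ⟨hle1, hle2⟩
  · exact sup_le (Co.le_def'.mpr fun q hq => hq.trans le_sup_left)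
      (Co.le_def'.mpr fun q hq => hq.trans le_sup_right)

/-- The embedding of `L` into `Co (QQ f n hP)`. -/
noncomputable def ghom : LatticeHom L (Co (QQ f n hP)) where
  toFun := gmap f n hP
  map_sup' := gmap_sup f n hP
  map_inf' := gmap_inf f n hP

lemma ghom_inj (hf : Function.Injective f) : Function.Injective (ghom f n hP) := by
  intro a b hab
  by_contra hne
  have hor : ¬ a ≤ b ∨ ¬ b ≤ a := by
    by_contra h
    push_neg at h
    exact hne (le_antisymm h.1 h.2)
  have key : ∀ c d : L, ¬ c ≤ d → gmap f n hP c = gmap f n hP d → False := by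
    intro c d hcd he
    obtain ⟨z, hz1, hz2⟩ := uu_separating f hf hcd
    set q : QQ f n hP := ⟨iota f n hP z, Set.mem_range_self z⟩ with hq
    have hmc : q ∈ (gmap f n hP c).1 := hz1
    rw [he] at hmc
    exact hz2 hmc
  rcases hor with h | h
  · exact key a b h hab
  · exact key b a h hab.symm

include hP in
lemma stmt7_forward (hf : Function.Injective f) :
    ∃ (Q : Type u) (_ : PartialOrder Q), Finite Q ∧ lengthLE Q n ∧
      ∃ g : LatticeHom L (Co Q), Function.Injective g :=
  ⟨QQ f n hP, inferInstance, inferInstance, lengthLE_QQ f n hP,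
    ghom f n hP, ghom_inj f n hP hf⟩

end Stmt7Aux
theorem stmt7.{u} (n : ℕ) (hn : 0 < n) (L : Type u) [Lattice L] [Finite L] :
    (∃ (P : Type u) (_ : PartialOrder P), lengthLE P n ∧
      ∃ f : LatticeHom L (Co P), Function.Injective f) ↔
    (∃ (Q : Type u) (_ : PartialOrder Q), Finite Q ∧ lengthLE Q n ∧
      ∃ f : LatticeHom L (Co Q), Function.Injective f) := by
  constructor
  · rintro ⟨P, hPO, hP, f, hf⟩
    letI := hPO
    letI := Fintype.ofFinite L
    exact stmt7_forward f n hP hf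
  · rintro ⟨Q, hQO, _, hQ, g, hg⟩
    exact ⟨Q, hQO, hQ, g, hg⟩
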